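/- (Reduction to the classical bound when posteriors coincide.) Let X be a measurable space and Y = {−1, 1}. Let M be a countable set of measurable functions from X × Y to {−1, 1}. Let P_S and P_T be probability measures on X and let κ be a Markov kernel from X to Y shared by source and target, so that the source joint distribution is P_S ⊗ κ and the target joint distribution is P_T ⊗ κ. Let H be a nonempty set of measurable hypotheses and set λ_H := inf_{h' ∈ H} ( ε_{P_S ⊗ κ}(h') + ε_{P_T ⊗ κ}(h') ). Then for every measurable hypothesis h with m_h ∈ M and the constant function 1 ∈ M, ε_{P_T ⊗ κ}(h) ≤ ε_{P_S ⊗ κ}(h) + d^{κ}_{M△M}(P_S, P_T) + λ_H; in particular, when source and target posterior kernels coincide, the posterior-discrepancy term vanishes and the bound reduces to a prior-alignment bound in which the prior divergence is measured under the common posterior. -/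

import Mathlib

open MeasureTheory ProbabilityTheory
open scoped ENNReal NNReal

noncomputable section

namespace IDG

variable {X : Type*} [MeasurableSpace X]

/-- The risk of a hypothesis `h : X → ℤˣ` (values in `{-1, 1}`) with respect to a joint
distribution `μ` on `X × ℤˣ`: the measure of the error set `{(x, y) | h x ≠ y}`. -/
def risk (μ : Measure (X × ℤˣ)) (h : X → ℤˣ) : ℝ :=
  (μ {z : X × ℤˣ | h z.1 ≠ z.2}).toReal

/-- The symmetric-difference set `A(m, m') = {z | m z ≠ m' z}`. -/
def errSet (m m' : X × ℤˣ → ℤˣ) : Set (X × ℤˣ) := {z | m z ≠ m' z}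

/-- The `x`-section of `A(m, m')`. -/
def xsec (m m' : X × ℤˣ → ℤˣ) (x : X) : Set ℤˣ := {y | m (x, y) ≠ m' (x, y)}

/-- The `M△M`-divergence between two measures on `X × ℤˣ`. -/
def dMM (M : Set (X × ℤˣ → ℤˣ)) (μ ν : Measure (X × ℤˣ)) : ℝ :=
  ⨆ m : M, ⨆ m' : M, |(μ (errSet m.1 m'.1)).toReal - (ν (errSet m.1 m'.1)).toReal|

/-- The `κ`-weighted `M△M`-divergence between two measures on `X`. -/
def dMMker (M : Set (X × ℤˣ → ℤˣ)) (κ : Kernel X ℤˣ) (P Q : Measure X) : ℝ :=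
  ⨆ m : M, ⨆ m' : M,
    |(∫ x, (κ x (xsec m.1 m'.1 x)).toReal ∂P) - (∫ x, (κ x (xsec m.1 m'.1 x)).toReal ∂Q)|

/-- Pointwise posterior discrepancy between two kernels. -/
def DM (M : Set (X × ℤˣ → ℤˣ)) (κ κ' : Kernel X ℤˣ) (x : X) : ℝ :=
  ⨆ m : M, ⨆ m' : M, |(κ x (xsec m.1 m'.1 x)).toReal - (κ' x (xsec m.1 m'.1 x)).toReal|

instance : MeasurableSingletonClass ℤˣ := by
  constructor
  intro u
  have h : ({u} : Set ℤˣ) = (Units.val) ⁻¹' {(u : ℤ)} := by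
    ext v; simp [Units.ext_iff]
  rw [h]
  exact ⟨{(u : ℤ)}, measurableSet_singleton _, rfl⟩

lemma errSet_measurable {m m' : X × ℤˣ → ℤˣ} (hm : Measurable m) (hm' : Measurable m') :
    MeasurableSet (errSet m m') :=
  (measurableSet_eq_fun hm hm').compl

lemma risk_eq (P : Measure X) [IsProbabilityMeasure P]
    (κ : Kernel X ℤˣ) [IsMarkovKernel κ] (h : X → ℤˣ)
    (hm : Measurable fun z : X × ℤˣ => z.2 * h z.1) :
    risk (P ⊗ₘ κ) h
      = ∫ x, (κ x (xsec (fun z : X × ℤˣ => z.2 * h z.1) (fun _ => 1) x)).toReal ∂P := by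
  have hset : {z : X × ℤˣ | h z.1 ≠ z.2}
      = errSet (fun z : X × ℤˣ => z.2 * h z.1) (fun _ => 1) := by
    ext ⟨x, y⟩
    have key : ∀ u v : ℤˣ, (v * u ≠ 1 ↔ u ≠ v) := by decide
    simpa [errSet] using (key (h x) y).symm
  have hms : MeasurableSet (errSet (fun z : X × ℤˣ => z.2 * h z.1) (fun _ => 1)) :=
    errSet_measurable hm measurable_const
  rw [risk, hset, Measure.compProd_apply hms]
  rw [integral_toReal]
  · rfl
  · exact (Kernel.measurable_kernel_prodMk_left hms).aemeasurable
  · exact Filter.Eventually.of_forall fun x => measure_lt_top _ _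

/-- **Reduction to the classical bound when source and target posteriors coincide.**
With a common posterior kernel `κ`, the posterior-discrepancy term vanishes and the bound
reduces to a prior-alignment bound measured under the common posterior. -/
theorem generalization_bound_shared_posterior
    (M : Set (X × ℤˣ → ℤˣ)) (hMcount : M.Countable) (hMmeas : ∀ m ∈ M, Measurable m)
    (PS PT : Measure X) (hPS : IsProbabilityMeasure PS) (hPT : IsProbabilityMeasure PT)
    (κ : Kernel X ℤˣ) (hκ : IsMarkovKernel κ)
    (H : Set (X → ℤˣ)) (hH : H.Nonempty) (hHmeas : ∀ h' ∈ H, Measurable h')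
    (h : X → ℤˣ) (hmeas : Measurable h)
    (hmh : (fun z : X × ℤˣ => z.2 * h z.1) ∈ M)
    (hone : (fun _ : X × ℤˣ => (1 : ℤˣ)) ∈ M) :
    risk (PT ⊗ₘ κ) h ≤
      risk (PS ⊗ₘ κ) h
      + dMMker M κ PS PT
      + (⨅ h' : H, (risk (PS ⊗ₘ κ) h'.1 + risk (PT ⊗ₘ κ) h'.1)) := by
  classical
  haveI : Nonempty M := ⟨⟨_, hmh⟩⟩
  -- risks as integrals
  have hS := risk_eq PS κ h (hMmeas _ hmh)
  have hT := risk_eq PT κ h (hMmeas _ hmh)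
  -- the summand of dMMker
  set F : M → M → ℝ := fun m m' =>
    |(∫ x, (κ x (xsec m.1 m'.1 x)).toReal ∂PS)
      - (∫ x, (κ x (xsec m.1 m'.1 x)).toReal ∂PT)| with hF
  have hint : ∀ (P : Measure X), IsProbabilityMeasure P → ∀ m m' : M,
      (0 : ℝ) ≤ ∫ x, (κ x (xsec m.1 m'.1 x)).toReal ∂P ∧
      ∫ x, (κ x (xsec m.1 m'.1 x)).toReal ∂P ≤ 1 := by
    intro P hP m m'
    haveI := hP
    refine ⟨integral_nonneg fun x => ENNReal.toReal_nonneg, ?_⟩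
    calc ∫ x, (κ x (xsec m.1 m'.1 x)).toReal ∂P
        ≤ ∫ _, (1 : ℝ) ∂P := by
          refine integral_mono_of_nonneg (Filter.Eventually.of_forall fun x =>
            ENNReal.toReal_nonneg) (integrable_const 1)
            (Filter.Eventually.of_forall fun x => ?_)
          have h1 : κ x (xsec m.1 m'.1 x) ≤ 1 := prob_le_one
          exact ENNReal.toReal_le_of_le_ofReal one_pos.le (by simpa using h1)
      _ = 1 := by simp
  have hF2 : ∀ m m' : M, F m m' ≤ 2 := by
    intro m m'
    obtain ⟨hS0, hS1⟩ := hint PS hPS m m'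
    obtain ⟨hT0, hT1⟩ := hint PT hPT m m'
    rw [hF, abs_sub_le_iff]
    constructor <;> linarith
  have hinner : ∀ m : M, BddAbove (Set.range fun m' : M => F m m') := by
    intro m
    exact ⟨2, by rintro _ ⟨m', rfl⟩; exact hF2 m m'⟩
  have houter : BddAbove (Set.range fun m : M => ⨆ m' : M, F m m') :=
    ⟨2, by rintro _ ⟨m, rfl⟩; exact ciSup_le (hF2 m)⟩
  have hd : F ⟨_, hmh⟩ ⟨_, hone⟩ ≤ dMMker M κ PS PT := by
    calc F ⟨_, hmh⟩ ⟨_, hone⟩ ≤ ⨆ m' : M, F ⟨_, hmh⟩ m' :=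
          le_ciSup (hinner _) ⟨_, hone⟩
      _ ≤ dMMker M κ PS PT := le_ciSup houter ⟨_, hmh⟩
  have hinf : (0 : ℝ) ≤ ⨅ h' : H, (risk (PS ⊗ₘ κ) h'.1 + risk (PT ⊗ₘ κ) h'.1) :=
    Real.iInf_nonneg fun h' => add_nonneg ENNReal.toReal_nonneg ENNReal.toReal_nonneg
  have habs : risk (PT ⊗ₘ κ) h ≤ risk (PS ⊗ₘ κ) h + F ⟨_, hmh⟩ ⟨_, hone⟩ := by
    rw [hS, hT, hF]
    have := abs_sub_le_iff.mp (le_refl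
      (|(∫ x, (κ x (xsec (fun z : X × ℤˣ => z.2 * h z.1) (fun _ => 1) x)).toReal ∂PS)
        - (∫ x, (κ x (xsec (fun z : X × ℤˣ => z.2 * h z.1) (fun _ => 1) x)).toReal ∂PT)|)
      )
    simp only
    linarith [this.2]
  linarith

end IDG
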